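/- arXiv:1407.1695 — 9 statements merged into one kernel-verified Lean document; each statement's English description precedes it below -/
import Mathlib

section
/- Let K be a field of characteristic 2 and n ≥ 3. The derived subalgebra of the Lie algebra o_I(n) of all symmetric n×n matrices over K (with the commutator bracket) is exactly ZD(n), the space of symmetric matrices with all diagonal entries equal to zero. -/
/-- Over a field of characteristic 2 and for `n ≥ 3`, the derived subalgebra of the
Lie algebra `o_I(n)` of all symmetric `n × n` matrices (with the commutator bracket)
is exactly `ZD(n)`, the space of symmetric matrices with zero diagonal. -/
theorem derived_oI_eq_ZD (K : Type*) [Field K] [CharP K 2] (n : ℕ) (hn : 3 ≤ n) :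
    ∀ M : Matrix (Fin n) (Fin n) K,
      M ∈ Submodule.span K
        {Z : Matrix (Fin n) (Fin n) K |
          ∃ X Y : Matrix (Fin n) (Fin n) K,
            X.transpose = X ∧ Y.transpose = Y ∧ Z = ⁅X, Y⁆} ↔
      (M.transpose = M ∧ ∀ i, M i i = 0) := by
  intro M
  set S : Set (Matrix (Fin n) (Fin n) K) :=
    {Z : Matrix (Fin n) (Fin n) K |
      ∃ X Y : Matrix (Fin n) (Fin n) K,
        X.transpose = X ∧ Y.transpose = Y ∧ Z = ⁅X, Y⁆} with hS
  constructor
  · -- forward direction: span of brackets is symmetric with zero diagonal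
    intro hM
    let P : Submodule K (Matrix (Fin n) (Fin n) K) :=
      { carrier := {A | A.transpose = A ∧ ∀ i, A i i = 0}
        add_mem' := by
          rintro A B ⟨hA, hA'⟩ ⟨hB, hB'⟩
          exact ⟨by rw [Matrix.transpose_add, hA, hB], fun i => by
            simp [Matrix.add_apply, hA' i, hB' i]⟩
        zero_mem' := ⟨by simp, fun i => rfl⟩
        smul_mem' := by
          rintro c A ⟨hA, hA'⟩
          exact ⟨by rw [Matrix.transpose_smul, hA], fun i => by
            simp [Matrix.smul_apply, hA' i]⟩ }
    have hle : Submodule.span K S ≤ P := by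
      rw [Submodule.span_le]
      rintro Z ⟨X, Y, hX, hY, rfl⟩
      have hX' : ∀ a b, X a b = X b a := fun a b => (congrFun (congrFun hX b) a)
      have hY' : ∀ a b, Y a b = Y b a := fun a b => (congrFun (congrFun hY b) a)
      have hbr : ∀ a b, ⁅X, Y⁆ a b = (∑ k, X a k * Y k b) - ∑ k, Y a k * X k b := by
        intro a b
        rw [Ring.lie_def]
        simp [Matrix.sub_apply, Matrix.mul_apply]
      constructor
      · ext a b
        rw [Matrix.transpose_apply, hbr, hbr]
        have h1 : (∑ k, X b k * Y k a) = ∑ k, Y a k * X k b := by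
          apply Finset.sum_congr rfl
          intro k _
          rw [hX' b k, hY' k a, mul_comm]
        have h2 : (∑ k, Y b k * X k a) = ∑ k, X a k * Y k b := by
          apply Finset.sum_congr rfl
          intro k _
          rw [hY' b k, hX' k a, mul_comm]
        rw [h1, h2, CharTwo.sub_eq_add, CharTwo.sub_eq_add, add_comm]
      · intro i
        rw [hbr, sub_eq_zero]
        apply Finset.sum_congr rfl
        intro k _
        rw [hX' i k, hY' i k, mul_comm]
    exact hle hM
  · rintro ⟨hsym, hdiag⟩
    have hsym' : ∀ a b, M a b = M b a := fun a b => (congrFun (congrFun hsym b) a)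
    -- key: for i ≠ j, E_ij + E_ji is a single bracket of symmetric matrices
    have key : ∀ i j : Fin n, i ≠ j →
        (Matrix.single i j (1:K) + Matrix.single j i 1) ∈ S := by
      intro i j hij
      obtain ⟨k, hki, hkj⟩ : ∃ k : Fin n, k ≠ i ∧ k ≠ j := by
        by_contra h
        push_neg at h
        have hsub : (Finset.univ : Finset (Fin n)) ⊆ {i, j} := by
          intro k _
          simp only [Finset.mem_insert, Finset.mem_singleton]
          by_cases hk : k = i
          · exact Or.inl hk
          · exact Or.inr (h k hk)
        have h1 := Finset.card_le_card hsub
        have h2 : ({i, j} : Finset (Fin n)).card ≤ 2 :=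
          (Finset.card_insert_le _ _).trans (by simp)
        rw [Finset.card_univ, Fintype.card_fin] at h1
        omega
      refine ⟨Matrix.single i k 1 + Matrix.single k i 1,
        Matrix.single k j 1 + Matrix.single j k 1, ?_, ?_, ?_⟩
      · ext a b
        simp only [Matrix.transpose_apply, Matrix.add_apply, Matrix.single,
          Matrix.of_apply]
        by_cases h1 : i = a <;> by_cases h2 : k = b <;> by_cases h3 : k = a <;>
          by_cases h4 : i = b <;> simp_all
      · ext a b
        simp only [Matrix.transpose_apply, Matrix.add_apply, Matrix.single,
          Matrix.of_apply]
        by_cases h1 : k = a <;> by_cases h2 : j = b <;> by_cases h3 : j = a <;>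
          by_cases h4 : k = b <;> simp_all
      · rw [Ring.lie_def]
        have hXY : (Matrix.single i k (1:K) + Matrix.single k i 1) *
            (Matrix.single k j 1 + Matrix.single j k 1) =
            Matrix.single i j 1 := by
          rw [add_mul, mul_add, mul_add,
            Matrix.single_mul_single_same,
            Matrix.single_mul_single_of_ne (h := hkj),
            Matrix.single_mul_single_of_ne (h := (Ne.symm hki)),
            Matrix.single_mul_single_of_ne (h := hij)]
          simp
        have hYX : (Matrix.single k j (1:K) + Matrix.single j k 1) *
            (Matrix.single i k 1 + Matrix.single k i 1) =
            Matrix.single j i 1 := by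
          rw [add_mul, mul_add, mul_add,
            Matrix.single_mul_single_same,
            Matrix.single_mul_single_of_ne (h := hij.symm),
            Matrix.single_mul_single_of_ne (h := hkj.symm),
            Matrix.single_mul_single_of_ne (h := hki)]
          simp
        rw [hXY, hYX, sub_eq_add_neg]
        congr 1
        have h11 : (1:K) + 1 = 0 := by
          have := CharTwo.add_self_eq_zero (1:K); simpa using this
        have : Matrix.single j i (1:K) + Matrix.single j i 1 = 0 := by
          rw [← Matrix.single_add, h11, Matrix.single_zero]
        exact (neg_eq_of_add_eq_zero_left this).symm
    -- decompose M as a sum of scaled basis brackets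
    have hM : (∑ p ∈ Finset.univ.filter (fun p : Fin n × Fin n => p.1 < p.2),
        M p.1 p.2 • (Matrix.single p.1 p.2 (1:K)
          + Matrix.single p.2 p.1 1)) = M := by
      ext a b
      rw [Matrix.sum_apply]
      simp only [Matrix.smul_apply, Matrix.add_apply, Matrix.single,
        Matrix.of_apply, smul_eq_mul]
      rcases lt_trichotomy a b with h | h | h
      · rw [Finset.sum_eq_single_of_mem (a, b)]
        · simp [h.ne, h.ne']
        · simp [h]
        · rintro ⟨p1, p2⟩ hp hne
          simp only [Finset.mem_filter, Finset.mem_univ, true_and] at hp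
          have h1 : ¬(p1 = a ∧ p2 = b) := by
            rintro ⟨rfl, rfl⟩; exact hne rfl
          have h2 : ¬(p2 = a ∧ p1 = b) := by
            rintro ⟨rfl, rfl⟩; exact absurd (h.trans hp) (lt_irrefl _)
          simp [h1, h2]
      · subst h
        rw [Finset.sum_eq_zero, (hdiag a).symm]
        rintro ⟨p1, p2⟩ hp
        simp only [Finset.mem_filter, Finset.mem_univ, true_and] at hp
        have h1 : ¬(p1 = a ∧ p2 = a) := by
          rintro ⟨rfl, rfl⟩; exact absurd hp (lt_irrefl _)
        have h2 : ¬(p2 = a ∧ p1 = a) := by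
          rintro ⟨rfl, rfl⟩; exact absurd hp (lt_irrefl _)
        simp [h1, h2]
      · rw [Finset.sum_eq_single_of_mem (b, a)]
        · simp [h.ne, h.ne', hsym' a b]
        · simp [h]
        · rintro ⟨p1, p2⟩ hp hne
          simp only [Finset.mem_filter, Finset.mem_univ, true_and] at hp
          have h1 : ¬(p1 = a ∧ p2 = b) := by
            rintro ⟨rfl, rfl⟩; exact absurd (h.trans hp) (lt_irrefl _)
          have h2 : ¬(p2 = a ∧ p1 = b) := by
            rintro ⟨rfl, rfl⟩; exact hne rfl
          simp [h1, h2]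
    rw [← hM]
    refine Submodule.sum_mem _ ?_
    rintro ⟨p1, p2⟩ hp
    simp only [Finset.mem_filter, Finset.mem_univ, true_and] at hp
    exact Submodule.smul_mem _ _ (Submodule.subset_span (key p1 p2 hp.ne))
end

section
/- Let A be an associative algebra over a field of characteristic 2. Then the superspace q(A) = A ⊕ Π(A), with even part A and odd part Π(A) (a copy of A with reversed parity), bracket [x,y] = xy + yx, [x,Π(y)] = Π(xy + yx), [Π(x),Π(y)] = xy + yx, and squaring (Π(x))² = x², satisfies the axioms of a Lie superalgebra (in particular the super Jacobi identity and the polarization identity relating the squaring to the bracket of odd elements). -/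
/-- Over a field `K` of characteristic 2 and an associative algebra `A`, the
queerification `q(A) = A ⊕ Π(A)` with bracket given (on each pair of parities) by
`c x y = x*y + y*x` (note that in characteristic 2 the commutator and the
anticommutator coincide) and squaring `s x = x*x` on odd elements satisfies the
axioms of a Lie superalgebra: the bracket is alternating and bilinear, the super
Jacobi identity holds in all parities (which in characteristic 2, all signs being
`+1`, is the single Leibniz identity for `c`), the squaring is quadratic, its
polarization reproduces the bracket of odd elements, and `[x², y] = [x,[x,y]]`. -/
theorem queerification_isLieSuperalgebra (K : Type*) [Field K] [CharP K 2]
    (A : Type*) [Ring A] [Algebra K A] :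
    (∀ x : A, x * x + x * x = 0) ∧
    (∀ (a : K) (x y : A), (a • x) * y + y * (a • x) = a • (x * y + y * x)) ∧
    (∀ x y z : A,
      x * (y * z + z * y) + (y * z + z * y) * x =
        ((x * y + y * x) * z + z * (x * y + y * x)) +
        (y * (x * z + z * x) + (x * z + z * x) * y)) ∧
    (∀ (a : K) (x : A), (a • x) * (a • x) = (a * a) • (x * x)) ∧
    (∀ x y : A, (x + y) * (x + y) + x * x + y * y = x * y + y * x) ∧
    (∀ x y : A, (x * x) * y + y * (x * x) = x * (x * y + y * x) + (x * y + y * x) * x) := by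
  have h2 : (2 : K) = 0 := by exact_mod_cast CharP.cast_eq_zero K 2
  have key : ∀ z : A, z + z = 0 := fun z => by
    rw [show z + z = (2 : K) • z from (two_smul K z).symm, h2, zero_smul]
  have key' : ∀ z : A, (2 : A) * z = 0 := fun z => by rw [two_mul]; exact key z
  have eqiff : ∀ a b : A, a + b = 0 → a = b := fun a b h => by
    have : a + (b + b) = (a + b) + b := (add_assoc a b b).symm
    rw [key b, h, add_zero, zero_add] at this; exact this
  refine ⟨fun x => key _, ?_, ?_, ?_, ?_, ?_⟩
  · intro a x y
    simp [smul_mul_assoc, mul_smul_comm, smul_add]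
  · intro x y z
    apply eqiff
    noncomm_ring
    simp [key']
  · intro a x
    rw [smul_mul_smul_comm]
  · intro x y
    apply eqiff
    noncomm_ring
    simp [key']
  · intro x y
    apply eqiff
    noncomm_ring
    simp [key']
end

section
/- Let g be a simple restricted Lie algebra over a field of characteristic 2. Then its queerification q(g) = g ⊕ Π(g), with bracket [x, Π(y)] = Π([x,y]) and squaring (Π(x))² = x^{[2]}, is a simple Lie superalgebra. -/
/-- Over a field of characteristic 2, let `g` be a simple restricted Lie algebra with
2-operation `sq`.  Model the queerification `q(g) = g ⊕ Π(g)` on `g × g`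
(first component even, second odd), with bracket
`[(x,y),(x',y')] = (⁅x,x'⁆ + ⁅y,y'⁆, ⁅x,y'⁆ + ⁅y,x'⁆)` and squaring
`(0,y)² = (sq y, 0)`.  Then `q(g)` is a simple Lie superalgebra: every homogeneous
ideal (closed under brackets with arbitrary elements and under squaring of its odd
part) is `⊥` or everything. -/
theorem queerification_of_simple_is_simple (K : Type*) [Field K] [CharP K 2]
    (L : Type*) [LieRing L] [LieAlgebra K L]
    (hsimple : LieAlgebra.IsSimple K L)
    (sq : L → L)
    (hsq_ad : ∀ x y : L, ⁅sq x, y⁆ = ⁅x, ⁅x, y⁆⁆)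
    (hsq_smul : ∀ (a : K) (x : L), sq (a • x) = (a * a) • sq x)
    (hsq_add : ∀ x y : L, sq (x + y) = sq x + sq y + ⁅x, y⁆) :
    ∀ I : Submodule K (L × L),
      (∀ z ∈ I, ((z.1, 0) : L × L) ∈ I ∧ ((0, z.2) : L × L) ∈ I) →
      (∀ z : L × L, ∀ w ∈ I,
        ((⁅z.1, w.1⁆ + ⁅z.2, w.2⁆, ⁅z.1, w.2⁆ + ⁅z.2, w.1⁆) : L × L) ∈ I) →
      (∀ w ∈ I, ((sq w.2, 0) : L × L) ∈ I) →
      I = ⊥ ∨ I = ⊤ := by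
  intro I hhom hbr _hsq
  -- helper brackets
  have hbr0 : ∀ x m : L, (m, (0:L)) ∈ I → ((⁅x, m⁆, (0:L)) : L × L) ∈ I := by
    intro x m hm
    have := hbr (x, 0) (m, 0) hm
    simpa using this
  have hbr1 : ∀ x m : L, ((0:L), m) ∈ I → (((0:L), ⁅x, m⁆) : L × L) ∈ I := by
    intro x m hm
    have := hbr (x, 0) (0, m) hm
    simpa using this
  -- the even and odd parts of I, as Lie ideals of L
  let J0 : LieIdeal K L :=
    { toSubmodule := I.comap (LinearMap.inl K L L)
      lie_mem := fun {x m} hm => hbr0 x m hm }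
  let J1 : LieIdeal K L :=
    { toSubmodule := I.comap (LinearMap.inr K L L)
      lie_mem := fun {x m} hm => hbr1 x m hm }
  have hJ0mem : ∀ x : L, x ∈ J0 ↔ ((x, (0:L)) : L × L) ∈ I := fun x => Iff.rfl
  have hJ1mem : ∀ y : L, y ∈ J1 ↔ (((0:L), y) : L × L) ∈ I := fun y => Iff.rfl
  -- a nonzero bracket in L
  obtain ⟨a, b, hab⟩ : ∃ a b : L, ⁅a, b⁆ ≠ 0 := by
    by_contra h
    push_neg at h
    exact hsimple.non_abelian ⟨h⟩
  by_cases hI : I = ⊥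
  · exact Or.inl hI
  right
  -- I contains a nonzero homogeneous element
  obtain ⟨z, hz, hz0⟩ : ∃ z ∈ I, z ≠ 0 := by
    by_contra h
    push_neg at h
    exact hI (le_antisymm (fun w hw => h w hw) bot_le)
  have hcases : J0 ≠ ⊥ ∨ J1 ≠ ⊥ := by
    rcases hhom z hz with ⟨h1, h2⟩
    by_cases hz1 : z.1 = 0
    · have hz2 : z.2 ≠ 0 := by
        intro h2'
        exact hz0 (Prod.ext hz1 h2')
      exact Or.inr (fun hbot => hz2 (by
        have : z.2 ∈ J1 := (hJ1mem z.2).2 h2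
        rwa [hbot, LieSubmodule.mem_bot] at this))
    · exact Or.inl (fun hbot => hz1 (by
        have : z.1 ∈ J0 := (hJ0mem z.1).2 h1
        rwa [hbot, LieSubmodule.mem_bot] at this))
  -- key claims: each part being ⊤ forces the other to be nonzero (via brackets)
  have step0 : J0 = ⊤ → J1 = ⊤ := by
    intro h0
    have hb : ((b, (0:L)) : L × L) ∈ I := (hJ0mem b).1 (h0 ▸ LieSubmodule.mem_top b)
    have : (((0:L), ⁅a, b⁆) : L × L) ∈ I := by
      have := hbr (0, a) (b, 0) hb
      simpa using this
    have hne : J1 ≠ ⊥ := fun hbot => hab (by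
      have := (hJ1mem ⁅a, b⁆).2 this
      rwa [hbot, LieSubmodule.mem_bot] at this)
    exact (hsimple.eq_bot_or_eq_top J1).resolve_left hne
  have step1 : J1 = ⊤ → J0 = ⊤ := by
    intro h1
    have hb : (((0:L), b) : L × L) ∈ I := (hJ1mem b).1 (h1 ▸ LieSubmodule.mem_top b)
    have : ((⁅a, b⁆, (0:L)) : L × L) ∈ I := by
      have := hbr (0, a) (0, b) hb
      simpa using this
    have hne : J0 ≠ ⊥ := fun hbot => hab (by
      have := (hJ0mem ⁅a, b⁆).2 this
      rwa [hbot, LieSubmodule.mem_bot] at this)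
    exact (hsimple.eq_bot_or_eq_top J0).resolve_left hne
  have hboth : J0 = ⊤ ∧ J1 = ⊤ := by
    rcases hcases with h | h
    · have h0 := (hsimple.eq_bot_or_eq_top J0).resolve_left h
      exact ⟨h0, step0 h0⟩
    · have h1 := (hsimple.eq_bot_or_eq_top J1).resolve_left h
      exact ⟨step1 h1, h1⟩
  -- conclude
  apply le_antisymm le_top
  intro w _
  have hw1 : ((w.1, (0:L)) : L × L) ∈ I := (hJ0mem w.1).1 (hboth.1 ▸ LieSubmodule.mem_top w.1)
  have hw2 : (((0:L), w.2) : L × L) ∈ I := (hJ1mem w.2).1 (hboth.2 ▸ LieSubmodule.mem_top w.2)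
  have := I.add_mem hw1 hw2
  simpa using this
end

section
/- Let g be a simple Lie algebra over a field of characteristic 2, let ḡ be its restricted closure, and let g^{<1>} be the minimal subalgebra of ḡ containing g together with all elements x^{[2]} for x in g. Then the partial queerification q̃(g) := g^{<1>} ⊕ Π(g), with bracket [x, Π(y)] = Π([x,y]) for x in g^{<1>}, y in g, and squaring (Π(x))² := x^{[2]}, is a simple Lie superalgebra. -/
/-- Over a field of characteristic 2, let `L` be the restricted closure (with
2-operation `sq`) of a simple Lie algebra `G` sitting inside it as an ideal; by
minimality of the restricted closure, the centralizer of `G` in `L` vanishes.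
Let `G1 = G^{<1>}` be the minimal subalgebra of `L` containing `G` and all
squares `sq x`, `x ∈ G`.  Model the partial queerification
`q̃(G) = G^{<1>} ⊕ Π(G)` on the submodule `Q = G1 × G` of `L × L`, with bracket
`[(x,y),(x',y')] = (⁅x,x'⁆ + ⁅y,y'⁆, ⁅x,y'⁆ + ⁅y,x'⁆)` and squaring
`(0,y)² = (sq y, 0)`.  Then `q̃(G)` is a simple Lie superalgebra: every
homogeneous ideal of it is `⊥` or all of `Q`. -/
theorem partial_queerification_is_simple (K : Type*) [Field K] [CharP K 2]
    (L : Type*) [LieRing L] [LieAlgebra K L]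
    (sq : L → L)
    (hsq_ad : ∀ x y : L, ⁅sq x, y⁆ = ⁅x, ⁅x, y⁆⁆)
    (hsq_smul : ∀ (a : K) (x : L), sq (a • x) = (a * a) • sq x)
    (hsq_add : ∀ x y : L, sq (x + y) = sq x + sq y + ⁅x, y⁆)
    (G : LieSubalgebra K L)
    (hGideal : ∀ z : L, ∀ x ∈ G, ⁅z, x⁆ ∈ G)
    (hGsimple : ∀ J : Submodule K L, J ≤ G.toSubmodule →
      (∀ x ∈ G, ∀ y ∈ J, ⁅x, y⁆ ∈ J) → J = ⊥ ∨ J = G.toSubmodule)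
    (hGnonab : ∃ x ∈ G, ∃ y ∈ G, ⁅x, y⁆ ≠ 0)
    (hcent : ∀ z : L, (∀ x ∈ G, ⁅z, x⁆ = 0) → z = 0)
    (G1 : LieSubalgebra K L)
    (hG1a : G ≤ G1)
    (hG1b : ∀ x ∈ G, sq x ∈ G1)
    (hG1min : ∀ H : LieSubalgebra K L, G ≤ H → (∀ x ∈ G, sq x ∈ H) → G1 ≤ H) :
    ∀ I : Submodule K (L × L),
      I ≤ (G1.toSubmodule).prod (G.toSubmodule) →
      (∀ z ∈ I, ((z.1, 0) : L × L) ∈ I ∧ ((0, z.2) : L × L) ∈ I) →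
      (∀ z ∈ (G1.toSubmodule).prod (G.toSubmodule), ∀ w ∈ I,
        ((⁅(z : L × L).1, w.1⁆ + ⁅(z : L × L).2, w.2⁆,
          ⁅(z : L × L).1, w.2⁆ + ⁅(z : L × L).2, w.1⁆) : L × L) ∈ I) →
      (∀ w ∈ I, ((sq w.2, 0) : L × L) ∈ I) →
      I = ⊥ ∨ I = (G1.toSubmodule).prod (G.toSubmodule) := by
  intro I hle hhom hbr hsqI
  -- even and odd parts of I
  set I0 : Submodule K L := I.comap (LinearMap.inl K L L) with hI0
  set I1 : Submodule K L := I.comap (LinearMap.inr K L L) with hI1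
  have memI0 : ∀ x : L, x ∈ I0 ↔ ((x, 0) : L × L) ∈ I := fun x => Iff.rfl
  have memI1 : ∀ y : L, y ∈ I1 ↔ ((0, y) : L × L) ∈ I := fun y => Iff.rfl
  -- I1 is an ideal of G
  have hI1le : I1 ≤ G.toSubmodule := by
    intro y hy
    exact ((hle ((memI1 y).mp hy)).2 : y ∈ G.toSubmodule)
  have hI1id : ∀ x ∈ G, ∀ y ∈ I1, ⁅x, y⁆ ∈ I1 := by
    intro x hx y hy
    have hz : ((x, 0) : L × L) ∈ (G1.toSubmodule).prod (G.toSubmodule) :=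
      ⟨hG1a hx, G.zero_mem⟩
    have := hbr _ hz _ ((memI1 y).mp hy)
    simpa [memI1] using this
  rcases hGsimple I1 hI1le hI1id with h1 | h1
  · -- I1 = ⊥, show I = ⊥
    left
    refine le_bot_iff.mp ?_
    intro z hz
    obtain ⟨hz1, hz2⟩ := hhom z hz
    have hz2' : z.2 = 0 := by
      have : z.2 ∈ I1 := (memI1 _).mpr hz2
      rw [h1] at this; simpa using this
    have hz1' : z.1 = 0 := by
      apply hcent
      intro y hy
      have hw : ((0, y) : L × L) ∈ (G1.toSubmodule).prod (G.toSubmodule) :=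
        ⟨G1.zero_mem, hy⟩
      have := hbr _ hw _ hz1
      have h2 : ⁅y, z.1⁆ ∈ I1 := by simpa [memI1] using this
      rw [h1] at h2
      have : ⁅y, z.1⁆ = 0 := by simpa using h2
      rw [← lie_skew, this, neg_zero]
    have : z = 0 := Prod.ext hz1' hz2'
    simpa [this]
  · -- I1 = G, show I = prod
    right
    -- G ⊆ I0 via derived subalgebra
    have hbrmem : ∀ x ∈ G, ∀ y ∈ G, ⁅x, y⁆ ∈ I0 := by
      intro x hx y hy
      have hz : ((0, x) : L × L) ∈ (G1.toSubmodule).prod (G.toSubmodule) :=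
        ⟨G1.zero_mem, hx⟩
      have hyI : ((0, y) : L × L) ∈ I := by
        have : y ∈ I1 := by rw [h1]; exact hy
        exact (memI1 y).mp this
      have := hbr _ hz _ hyI
      simpa [memI0] using this
    -- derived ideal J = G
    set S : Set L := {z | ∃ x ∈ G, ∃ y ∈ G, ⁅x, y⁆ = z} with hS
    set J : Submodule K L := Submodule.span K S with hJ
    have hSsubG : S ⊆ G.toSubmodule := by
      rintro z ⟨x, hx, y, hy, rfl⟩
      exact G.lie_mem hx hy
    have hJle : J ≤ G.toSubmodule := Submodule.span_le.mpr hSsubG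
    have hJid : ∀ x ∈ G, ∀ y ∈ J, ⁅x, y⁆ ∈ J := by
      intro x hx y hy
      induction hy using Submodule.span_induction with
      | mem w hw =>
        rcases hw with ⟨a, ha, b, hb, rfl⟩
        rw [leibniz_lie]
        exact J.add_mem
          (Submodule.subset_span ⟨⁅x, a⁆, hGideal x a ha, b, hb, rfl⟩)
          (Submodule.subset_span ⟨a, ha, ⁅x, b⁆, hGideal x b hb, rfl⟩)
      | zero => simpa using J.zero_mem
      | add u v _ _ hu hv => rw [lie_add]; exact J.add_mem hu hv
      | smul a u _ hu => rw [lie_smul]; exact J.smul_mem a hu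
    have hJeq : J = G.toSubmodule := by
      rcases hGsimple J hJle hJid with h | h
      · exfalso
        obtain ⟨x, hx, y, hy, hne⟩ := hGnonab
        have : ⁅x, y⁆ ∈ J := Submodule.subset_span ⟨x, hx, y, hy, rfl⟩
        rw [h] at this
        exact hne (by simpa using this)
      · exact h
    have hGsubI0 : G.toSubmodule ≤ I0 := by
      rw [← hJeq]
      refine Submodule.span_le.mpr ?_
      rintro z ⟨x, hx, y, hy, rfl⟩
      exact hbrmem x hx y hy
    -- sq of G in I0
    have hsqI0 : ∀ x ∈ G, sq x ∈ I0 := by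
      intro x hx
      have hxI : ((0, x) : L × L) ∈ I := by
        have : x ∈ I1 := by rw [h1]; exact hx
        exact (memI1 x).mp this
      have := hsqI _ hxI
      simpa [memI0] using this
    -- I0 is a Lie subalgebra
    have hI0lie : ∀ {a b : L}, a ∈ I0 → b ∈ I0 → ⁅a, b⁆ ∈ I0 := by
      intro a b ha hb
      have haG1 : a ∈ G1 := (hle ((memI0 a).mp ha)).1
      have hz : ((a, 0) : L × L) ∈ (G1.toSubmodule).prod (G.toSubmodule) :=
        ⟨haG1, G.zero_mem⟩
      have := hbr _ hz _ ((memI0 b).mp hb)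
      simpa [memI0] using this
    set H : LieSubalgebra K L :=
      { I0 with lie_mem' := fun ha hb => hI0lie ha hb } with hH
    have hG1sub : G1 ≤ H := hG1min H (fun _ hx => hGsubI0 hx) hsqI0
    -- conclude
    refine le_antisymm hle ?_
    rintro ⟨x, y⟩ ⟨hx, hy⟩
    have hxI : ((x, 0) : L × L) ∈ I := (memI0 x).mp (hG1sub hx)
    have hyI : ((0, y) : L × L) ∈ I := by
      have : y ∈ I1 := by rw [h1]; exact hy
      exact (memI1 y).mp this
    have := I.add_mem hxI hyI
    simpa using this
end

section
/- Let g = g_+ ⊕ g_- be a Z/2-graded simple Lie algebra over a field of characteristic 2, let (g, gr) be the minimal subalgebra of the restricted closure of g containing g and all elements x^{[2]} with x in g_-, and let S(g, gr) be the Lie superalgebra on the space of (g, gr) with even part the +-part, odd part g_-, and squaring x² := x^{[2]} for x in g_-. Then S(g, gr) is a simple Lie superalgebra. -/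
/-- Over a field of characteristic 2, let `L` be the restricted closure (with
2-operation `sq`) of a simple Lie algebra `G` sitting inside it as an ideal, the
centralizer of `G` in `L` being zero, and let `G = Gp ⊕ Gm` be a `ℤ/2`-grading of
`G`.  Let `M = (G, gr)` be the minimal subalgebra of `L` containing `G` together
with all squares `sq x`, `x ∈ Gm`; the grading extends to `M = Mp ⊕ Gm`.
Model the Lie superalgebra `S(G, gr)` on the submodule `Q = Mp × Gm` of `L × L`
(even part `Mp`, odd part `Gm`) with bracket
`[(x,y),(x',y')] = (⁅x,x'⁆ + ⁅y,y'⁆, ⁅x,y'⁆ + ⁅y,x'⁆)` and squaring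
`(0,y)² = (sq y, 0)`.  Then `S(G, gr)` is a simple Lie superalgebra. -/
theorem method2_superization_is_simple (K : Type*) [Field K] [CharP K 2]
    (L : Type*) [LieRing L] [LieAlgebra K L]
    (sq : L → L)
    (hsq_ad : ∀ x y : L, ⁅sq x, y⁆ = ⁅x, ⁅x, y⁆⁆)
    (hsq_smul : ∀ (a : K) (x : L), sq (a • x) = (a * a) • sq x)
    (hsq_add : ∀ x y : L, sq (x + y) = sq x + sq y + ⁅x, y⁆)
    (G : LieSubalgebra K L)
    (hGideal : ∀ z : L, ∀ x ∈ G, ⁅z, x⁆ ∈ G)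
    (hGsimple : ∀ J : Submodule K L, J ≤ G.toSubmodule →
      (∀ x ∈ G, ∀ y ∈ J, ⁅x, y⁆ ∈ J) → J = ⊥ ∨ J = G.toSubmodule)
    (hGnonab : ∃ x ∈ G, ∃ y ∈ G, ⁅x, y⁆ ≠ 0)
    (hcent : ∀ z : L, (∀ x ∈ G, ⁅z, x⁆ = 0) → z = 0)
    -- the ℤ/2-grading `G = Gp ⊕ Gm`
    (Gp Gm : Submodule K L)
    (hGdecomp : Gp ⊔ Gm = G.toSubmodule) (hGdisj : Gp ⊓ Gm = ⊥)
    (hgr_pp : ∀ x ∈ Gp, ∀ y ∈ Gp, ⁅x, y⁆ ∈ Gp)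
    (hgr_pm : ∀ x ∈ Gp, ∀ y ∈ Gm, ⁅x, y⁆ ∈ Gm)
    (hgr_mm : ∀ x ∈ Gm, ∀ y ∈ Gm, ⁅x, y⁆ ∈ Gp)
    -- `M = (G, gr)`: the minimal subalgebra containing `G` and `sq '' Gm`
    (M : LieSubalgebra K L)
    (hMa : G ≤ M) (hMb : ∀ x ∈ Gm, sq x ∈ M)
    (hMmin : ∀ H : LieSubalgebra K L, G ≤ H → (∀ x ∈ Gm, sq x ∈ H) → M ≤ H)
    -- the extension of the grading to `M = Mp ⊕ Gm`
    (Mp : Submodule K L)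
    (hMpGp : Gp ≤ Mp) (hMpsq : ∀ x ∈ Gm, sq x ∈ Mp)
    (hMdecomp : Mp ⊔ Gm = M.toSubmodule) (hMdisj : Mp ⊓ Gm = ⊥)
    (hMgr_pp : ∀ x ∈ Mp, ∀ y ∈ Mp, ⁅x, y⁆ ∈ Mp)
    (hMgr_pm : ∀ x ∈ Mp, ∀ y ∈ Gm, ⁅x, y⁆ ∈ Gm) :
    ∀ I : Submodule K (L × L),
      I ≤ Mp.prod Gm →
      (∀ z ∈ I, ((z.1, 0) : L × L) ∈ I ∧ ((0, z.2) : L × L) ∈ I) →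
      (∀ z ∈ Mp.prod Gm, ∀ w ∈ I,
        ((⁅(z : L × L).1, w.1⁆ + ⁅(z : L × L).2, w.2⁆,
          ⁅(z : L × L).1, w.2⁆ + ⁅(z : L × L).2, w.1⁆) : L × L) ∈ I) →
      (∀ w ∈ I, ((sq w.2, 0) : L × L) ∈ I) →
      I = ⊥ ∨ I = Mp.prod Gm := by
  intro I hIle hIhom hIbr hIsq
  classical
  -- the even and odd parts of `I`
  set Ip : Submodule K L := I.comap (LinearMap.inl K L L) with hIpdef
  set Im : Submodule K L := I.comap (LinearMap.inr K L L) with hImdef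
  have hIp : ∀ x : L, x ∈ Ip ↔ ((x, 0) : L × L) ∈ I := by
    intro x; simp [hIpdef, Submodule.mem_comap]
  have hIm : ∀ y : L, y ∈ Im ↔ ((0, y) : L × L) ∈ I := by
    intro y; simp [hImdef, Submodule.mem_comap]
  have hIpMp : Ip ≤ Mp := fun x hx =>
    ((Submodule.mem_prod.mp (hIle ((hIp x).1 hx)))).1
  have hImGm : Im ≤ Gm := fun y hy =>
    ((Submodule.mem_prod.mp (hIle ((hIm y).1 hy)))).2
  have hGmG : Gm ≤ G.toSubmodule := by rw [← hGdecomp]; exact le_sup_right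
  have hGpG : Gp ≤ G.toSubmodule := by rw [← hGdecomp]; exact le_sup_left
  have hMpM : Mp ≤ M.toSubmodule := by rw [← hMdecomp]; exact le_sup_left
  -- basic bracket stability of the parts of `I`
  have hb_pp : ∀ x ∈ Mp, ∀ a ∈ Ip, ⁅x, a⁆ ∈ Ip := by
    intro x hx a ha
    have := hIbr (x, 0) (Submodule.mem_prod.mpr ⟨hx, Gm.zero_mem⟩)
      (a, 0) ((hIp a).1 ha)
    rw [hIp]
    simpa using this
  have hb_pm : ∀ x ∈ Mp, ∀ b ∈ Im, ⁅x, b⁆ ∈ Im := by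
    intro x hx b hb
    have := hIbr (x, 0) (Submodule.mem_prod.mpr ⟨hx, Gm.zero_mem⟩)
      (0, b) ((hIm b).1 hb)
    rw [hIm]
    simpa using this
  have hb_mp : ∀ y ∈ Gm, ∀ a ∈ Ip, ⁅y, a⁆ ∈ Im := by
    intro y hy a ha
    have := hIbr (0, y) (Submodule.mem_prod.mpr ⟨Mp.zero_mem, hy⟩)
      (a, 0) ((hIp a).1 ha)
    rw [hIm]
    simpa using this
  have hb_mm : ∀ y ∈ Gm, ∀ b ∈ Im, ⁅y, b⁆ ∈ Ip := by
    intro y hy b hb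
    have := hIbr (0, y) (Submodule.mem_prod.mpr ⟨Mp.zero_mem, hy⟩)
      (0, b) ((hIm b).1 hb)
    rw [hIp]
    simpa using this
  have hsqIp : ∀ y ∈ Im, sq y ∈ Ip := by
    intro y hy
    have := hIsq (0, y) ((hIm y).1 hy)
    rw [hIp]
    simpa using this
  -- `J = Ip ⊔ Im`; `J ⊓ G` is an ideal of `G`
  set J : Submodule K L := Ip ⊔ Im with hJdef
  have hJbr : ∀ x ∈ G, ∀ y ∈ J, ⁅x, y⁆ ∈ J := by
    intro x hx y hy
    have hx' : x ∈ Gp ⊔ Gm := by rw [hGdecomp]; exact hx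
    obtain ⟨p, hp, m, hm, rfl⟩ := Submodule.mem_sup.mp hx'
    obtain ⟨a, ha, b, hb, rfl⟩ := Submodule.mem_sup.mp hy
    rw [add_lie, lie_add, lie_add]
    exact add_mem
      (add_mem (Submodule.mem_sup_left (hb_pp p (hMpGp hp) a ha))
        (Submodule.mem_sup_right (hb_pm p (hMpGp hp) b hb)))
      (add_mem (Submodule.mem_sup_right (hb_mp m hm a ha))
        (Submodule.mem_sup_left (hb_mm m hm b hb)))
  have hJGbr : ∀ x ∈ G, ∀ y ∈ J ⊓ G.toSubmodule, ⁅x, y⁆ ∈ J ⊓ G.toSubmodule := by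
    intro x hx y hy
    refine ⟨hJbr x hx y hy.1, ?_⟩
    have : ⁅y, x⁆ ∈ G := hGideal y x hx
    have := G.toSubmodule.neg_mem this
    simpa using this
  rcases hGsimple (J ⊓ G.toSubmodule) inf_le_right hJGbr with hbot | htop
  · -- `J ⊓ G = ⊥`: then `I = ⊥`
    left
    have hImbot : ∀ y ∈ Im, y = 0 := by
      intro y hy
      have : y ∈ J ⊓ G.toSubmodule :=
        ⟨Submodule.mem_sup_right hy, hGmG (hImGm hy)⟩
      rw [hbot] at this
      simpa using this
    rw [Submodule.eq_bot_iff]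
    intro w hw
    have hw1 : w.1 ∈ Ip := (hIp w.1).2 (hIhom w hw).1
    have hw2 : w.2 ∈ Im := (hIm w.2).2 (hIhom w hw).2
    have hw2z : w.2 = 0 := hImbot _ hw2
    have hcentw : ∀ x ∈ G, ⁅w.1, x⁆ = 0 := by
      intro x hx
      have hx' : x ∈ Gp ⊔ Gm := by rw [hGdecomp]; exact hx
      obtain ⟨p, hp, m, hm, rfl⟩ := Submodule.mem_sup.mp hx'
      have h1 : ⁅w.1, p⁆ ∈ J ⊓ G.toSubmodule := by
        constructor
        · have : ⁅p, w.1⁆ ∈ Ip := hb_pp p (hMpGp hp) w.1 hw1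
          have := J.neg_mem (Submodule.mem_sup_left this)
          simpa using this
        · exact hGideal w.1 p (hGpG hp)
      have h2 : ⁅w.1, m⁆ ∈ J ⊓ G.toSubmodule := by
        constructor
        · have : ⁅m, w.1⁆ ∈ Im := hb_mp m hm w.1 hw1
          have := J.neg_mem (Submodule.mem_sup_right this)
          simpa using this
        · exact hGideal w.1 m (hGmG hm)
      rw [hbot] at h1 h2
      rw [lie_add, (Submodule.mem_bot K).mp h1, (Submodule.mem_bot K).mp h2, add_zero]
    have hw1z : w.1 = 0 := hcent w.1 hcentw
    exact Prod.ext hw1z hw2z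
  · -- `J ⊓ G = G`: then `I = Mp.prod Gm`
    right
    have hGJ : G.toSubmodule ≤ J := by
      rw [← htop]; exact inf_le_left
    have hGmIm : Gm ≤ Im := by
      intro y hy
      obtain ⟨a, ha, b, hb, hab⟩ := Submodule.mem_sup.mp (hGJ (hGmG hy))
      have haGm : a ∈ Gm := by
        have : a = y - b := by rw [← hab]; abel
        rw [this]; exact Gm.sub_mem hy (hImGm hb)
      have : a ∈ Mp ⊓ Gm := ⟨hIpMp ha, haGm⟩
      rw [hMdisj] at this
      have ha0 : a = 0 := by simpa using this
      have : y = b := by rw [← hab, ha0, zero_add]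
      rw [this]; exact hb
    have hGpIp : Gp ≤ Ip := by
      intro x hx
      obtain ⟨a, ha, b, hb, hab⟩ := Submodule.mem_sup.mp (hGJ (hGpG hx))
      have hbMp : b ∈ Mp := by
        have : b = x - a := by rw [← hab]; abel
        rw [this]; exact Mp.sub_mem (hMpGp hx) (hIpMp ha)
      have : b ∈ Mp ⊓ Gm := ⟨hbMp, hImGm hb⟩
      rw [hMdisj] at this
      have hb0 : b = 0 := by simpa using this
      have : x = a := by rw [← hab, hb0, add_zero]
      rw [this]; exact ha
    -- the subalgebra `H = Ip ⊔ Gm` contains `G` and all `sq x`, `x ∈ Gm`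
    set H : LieSubalgebra K L :=
      { carrier := (Ip ⊔ Gm : Submodule K L)
        add_mem' := fun h₁ h₂ => (Ip ⊔ Gm : Submodule K L).add_mem h₁ h₂
        zero_mem' := (Ip ⊔ Gm : Submodule K L).zero_mem
        smul_mem' := fun c _ h => (Ip ⊔ Gm : Submodule K L).smul_mem c h
        lie_mem' := by
          intro x y hx hy
          obtain ⟨a, ha, m, hm, rfl⟩ := Submodule.mem_sup.mp hx
          obtain ⟨a', ha', m', hm', rfl⟩ := Submodule.mem_sup.mp hy
          show ⁅a + m, a' + m'⁆ ∈ Ip ⊔ Gm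
          rw [add_lie, lie_add, lie_add]
          exact add_mem
            (add_mem (Submodule.mem_sup_left (hb_pp a (hIpMp ha) a' ha'))
              (Submodule.mem_sup_right (hMgr_pm a (hIpMp ha) m' hm')))
            (add_mem (Submodule.mem_sup_right (hImGm (hb_mp m hm a' ha')))
              (Submodule.mem_sup_left (hGpIp (hgr_mm m hm m' hm')))) } with hHdef
    have hHmem : ∀ x : L, x ∈ H ↔ x ∈ Ip ⊔ Gm := fun x => Iff.rfl
    have hGH : G ≤ H := by
      intro x hx
      rw [hHmem]
      have hx' : x ∈ Gp ⊔ Gm := by rw [hGdecomp]; exact hx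
      obtain ⟨p, hp, m, hm, rfl⟩ := Submodule.mem_sup.mp hx'
      exact add_mem (Submodule.mem_sup_left (hGpIp hp)) (Submodule.mem_sup_right hm)
    have hsqH : ∀ x ∈ Gm, sq x ∈ H := by
      intro x hx
      rw [hHmem]
      exact Submodule.mem_sup_left (hsqIp x (hGmIm hx))
    have hMH : M ≤ H := hMmin H hGH hsqH
    have hMpIp : Mp ≤ Ip := by
      intro x hx
      have : x ∈ Ip ⊔ Gm := (hHmem x).1 (hMH (hMpM hx))
      obtain ⟨a, ha, b, hb, hab⟩ := Submodule.mem_sup.mp this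
      have hbMp : b ∈ Mp := by
        have : b = x - a := by rw [← hab]; abel
        rw [this]; exact Mp.sub_mem hx (hIpMp ha)
      have : b ∈ Mp ⊓ Gm := ⟨hbMp, hb⟩
      rw [hMdisj] at this
      have hb0 : b = 0 := by simpa using this
      have : x = a := by rw [← hab, hb0, add_zero]
      rw [this]; exact ha
    apply le_antisymm hIle
    intro w hw
    have hw' := Submodule.mem_prod.mp hw
    have h1 : ((w.1, 0) : L × L) ∈ I := (hIp w.1).1 (hMpIp hw'.1)
    have h2 : ((0, w.2) : L × L) ∈ I := (hIm w.2).1 (hGmIm hw'.2)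
    have := I.add_mem h1 h2
    simpa using this
end

section
/- Let g be a simple Lie superalgebra over a field of characteristic 2 and let F(g) be the underlying Lie algebra (forgetting the squaring, with [x,x] = 0 for odd x). Then h := [g_odd, g_odd] ⊕ g_odd is an ideal of F(g), and h has no nonzero proper ideals that are graded with respect to the Z/2-grading inherited from the superalgebra parity. -/
/-- Over a field of characteristic 2, let `g` be a simple Lie superalgebra, modelled
as a Lie algebra `V` (the desuperization `F(g)`) with `ℤ/2`-grading `V = Ve ⊕ Vo`
and squaring `sq` on the odd part, simplicity being stated as absence of nonzero
proper homogeneous ideals closed under squaring of odd elements.  Then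
`h := [Vo, Vo] ⊕ Vo` is an ideal of `F(g)`, and `h` has no nonzero proper ideals
graded with respect to the inherited `ℤ/2`-grading. -/
theorem h_ideal_no_graded_ideals (K : Type*) [Field K] [CharP K 2]
    (V : Type*) [LieRing V] [LieAlgebra K V]
    (Ve Vo : Submodule K V)
    (hdecomp : Ve ⊔ Vo = ⊤) (hdisj : Ve ⊓ Vo = ⊥)
    (hgr_ee : ∀ x ∈ Ve, ∀ y ∈ Ve, ⁅x, y⁆ ∈ Ve)
    (hgr_eo : ∀ x ∈ Ve, ∀ y ∈ Vo, ⁅x, y⁆ ∈ Vo)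
    (hgr_oo : ∀ x ∈ Vo, ∀ y ∈ Vo, ⁅x, y⁆ ∈ Ve)
    (sq : V → V)
    (hsq_even : ∀ x ∈ Vo, sq x ∈ Ve)
    (hsq_ad : ∀ x ∈ Vo, ∀ y : V, ⁅sq x, y⁆ = ⁅x, ⁅x, y⁆⁆)
    (hsq_pol : ∀ x ∈ Vo, ∀ y ∈ Vo, sq (x + y) = sq x + sq y + ⁅x, y⁆)
    (hsq_smul : ∀ (a : K), ∀ x ∈ Vo, sq (a • x) = (a * a) • sq x)
    (hsimple : ∀ I : Submodule K V,
      I = (I ⊓ Ve) ⊔ (I ⊓ Vo) →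
      (∀ z : V, ∀ w ∈ I, ⁅z, w⁆ ∈ I) →
      (∀ x ∈ I ⊓ Vo, sq x ∈ I) →
      I = ⊥ ∨ I = ⊤)
    (hnonab : ∃ x y : V, ⁅x, y⁆ ≠ 0) :
    (∀ z : V, ∀ w ∈ Submodule.span K {z : V | ∃ x ∈ Vo, ∃ y ∈ Vo, z = ⁅x, y⁆} ⊔ Vo,
      ⁅z, w⁆ ∈ Submodule.span K {z : V | ∃ x ∈ Vo, ∃ y ∈ Vo, z = ⁅x, y⁆} ⊔ Vo) ∧
    (∀ J : Submodule K V,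
      J ≤ Submodule.span K {z : V | ∃ x ∈ Vo, ∃ y ∈ Vo, z = ⁅x, y⁆} ⊔ Vo →
      (J = (J ⊓ Submodule.span K {z : V | ∃ x ∈ Vo, ∃ y ∈ Vo, z = ⁅x, y⁆}) ⊔ (J ⊓ Vo)) →
      (∀ z ∈ Submodule.span K {z : V | ∃ x ∈ Vo, ∃ y ∈ Vo, z = ⁅x, y⁆} ⊔ Vo,
        ∀ w ∈ J, ⁅z, w⁆ ∈ J) →
      J = ⊥ ∨ J = Submodule.span K {z : V | ∃ x ∈ Vo, ∃ y ∈ Vo, z = ⁅x, y⁆} ⊔ Vo) := by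
  classical
  set S : Submodule K V := Submodule.span K {z : V | ∃ x ∈ Vo, ∃ y ∈ Vo, z = ⁅x, y⁆} with hSdef
  -- S ⊆ Ve
  have hSVe : S ≤ Ve := by
    rw [hSdef, Submodule.span_le]
    rintro z ⟨x, hx, y, hy, rfl⟩
    exact hgr_oo x hx y hy
  -- decomposition of any element
  have hdec : ∀ v : V, ∃ e ∈ Ve, ∃ o ∈ Vo, v = e + o := by
    intro v
    have hv : v ∈ Ve ⊔ Vo := by rw [hdecomp]; exact Submodule.mem_top
    obtain ⟨e, he, o, ho, h⟩ := Submodule.mem_sup.1 hv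
    exact ⟨e, he, o, ho, h.symm⟩
  -- Part 1 : h = S ⊔ Vo is an ideal.
  have hpart1 : ∀ z : V, ∀ w ∈ S ⊔ Vo, ⁅z, w⁆ ∈ S ⊔ Vo := by
    intro z
    suffices hh : S ⊔ Vo ≤ (S ⊔ Vo).comap (LieAlgebra.ad K V z) by
      intro w hw
      exact hh hw
    obtain ⟨e, he, o, ho, rfl⟩ := hdec z
    apply sup_le
    · rw [hSdef, Submodule.span_le]
      rintro w ⟨x, hx, y, hy, rfl⟩
      simp only [Submodule.mem_comap, LieAlgebra.ad_apply, SetLike.mem_coe]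
      rw [add_lie, leibniz_lie]
      refine Submodule.add_mem _ (Submodule.add_mem _ ?_ ?_) ?_
      · exact Submodule.mem_sup_left (Submodule.subset_span ⟨_, hgr_eo e he x hx, _, hy, rfl⟩)
      · exact Submodule.mem_sup_left (Submodule.subset_span ⟨_, hx, _, hgr_eo e he y hy, rfl⟩)
      · have h1 : ⁅⁅x, y⁆, o⁆ ∈ Vo := hgr_eo _ (hgr_oo x hx y hy) o ho
        have h2 : ⁅o, ⁅x, y⁆⁆ = -⁅⁅x, y⁆, o⁆ := (lie_skew _ _).symm
        rw [h2]
        exact Submodule.mem_sup_right (Submodule.neg_mem _ h1)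
    · intro v hv
      simp only [Submodule.mem_comap, LieAlgebra.ad_apply]
      rw [add_lie]
      refine Submodule.add_mem _ ?_ ?_
      · exact Submodule.mem_sup_right (hgr_eo e he v hv)
      · exact Submodule.mem_sup_left (Submodule.subset_span ⟨_, ho, _, hv, rfl⟩)
  refine ⟨hpart1, ?_⟩
  intro J hJle hJgraded hJideal
  -- the span of squares of all odd elements
  set W : Submodule K V := Submodule.span K {u : V | ∃ x ∈ Vo, u = sq x} with hWdef
  have hWVe : W ≤ Ve := by
    rw [hWdef, Submodule.span_le]
    rintro u ⟨x, hx, rfl⟩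
    exact hsq_even x hx
  set I : Submodule K V := (S ⊔ Vo) ⊔ W with hIdef
  have hSI : S ≤ I := le_trans le_sup_left le_sup_left
  have hVoI : Vo ≤ I := le_trans le_sup_right le_sup_left
  have hIgraded : I = (I ⊓ Ve) ⊔ (I ⊓ Vo) := by
    refine le_antisymm ?_ (sup_le inf_le_left inf_le_left)
    refine sup_le (sup_le ?_ ?_) ?_
    · exact le_trans (le_inf hSI hSVe) le_sup_left
    · exact le_trans (le_inf hVoI le_rfl) le_sup_right
    · exact le_trans (le_inf le_sup_right hWVe) le_sup_left
  have hIideal : ∀ z : V, ∀ w ∈ I, ⁅z, w⁆ ∈ I := by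
    intro z
    suffices hh : I ≤ I.comap (LieAlgebra.ad K V z) by
      intro w hw; exact hh hw
    refine sup_le ?_ ?_
    · intro w hw
      simp only [Submodule.mem_comap, LieAlgebra.ad_apply]
      exact Submodule.mem_sup_left (hpart1 z w hw)
    · rw [hWdef, Submodule.span_le]
      rintro u ⟨x, hx, rfl⟩
      simp only [Submodule.mem_comap, LieAlgebra.ad_apply, SetLike.mem_coe]
      have h1 : ⁅z, x⁆ ∈ S ⊔ Vo := hpart1 z x (Submodule.mem_sup_right hx)
      have h2 : ⁅x, z⁆ ∈ S ⊔ Vo := by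
        have : ⁅x, z⁆ = -⁅z, x⁆ := (lie_skew _ _).symm
        rw [this]; exact Submodule.neg_mem _ h1
      have h3 : ⁅x, ⁅x, z⁆⁆ ∈ S ⊔ Vo := hpart1 x _ h2
      have h4 : ⁅z, sq x⁆ = -⁅sq x, z⁆ := (lie_skew _ _).symm
      rw [h4, hsq_ad x hx z]
      exact Submodule.mem_sup_left (Submodule.neg_mem _ h3)
  have hIsq : ∀ x ∈ I ⊓ Vo, sq x ∈ I := by
    intro x hx
    exact Submodule.mem_sup_right (Submodule.subset_span ⟨x, hx.2, rfl⟩)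
  rcases hsimple I hIgraded hIideal hIsq with hI | hI
  · -- I = ⊥ : then h = ⊥ and J = ⊥
    left
    have : J ≤ (⊥ : Submodule K V) := hJle.trans (le_sup_left.trans (le_of_eq hI))
    exact le_bot_iff.1 this
  · -- I = ⊤ : then J is an ideal of all of g
    have hadJ : ∀ z : V, ∀ w ∈ J, ⁅z, w⁆ ∈ J := by
      intro z w hw
      have hz : z ∈ I := by rw [hI]; exact Submodule.mem_top
      revert z
      suffices hh : I ≤ J.comap ((LieAlgebra.ad K V w).comp (LinearMap.id)) by
        intro z hz'
        have := hh (by rw [hI]; exact Submodule.mem_top : z ∈ I)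
        simp only [Submodule.mem_comap, LinearMap.comp_apply, LinearMap.id_apply,
          LieAlgebra.ad_apply] at this
        have hskew : ⁅z, w⁆ = -⁅w, z⁆ := (lie_skew _ _).symm
        rw [hskew]
        exact Submodule.neg_mem _ this
      refine sup_le ?_ ?_
      · intro z hz'
        simp only [Submodule.mem_comap, LinearMap.comp_apply, LinearMap.id_apply,
          LieAlgebra.ad_apply]
        have h1 : ⁅z, w⁆ ∈ J := hJideal z hz' w hw
        have h2 : ⁅w, z⁆ = -⁅z, w⁆ := (lie_skew _ _).symm
        rw [h2]; exact Submodule.neg_mem _ h1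
      · rw [hWdef, Submodule.span_le]
        rintro u ⟨x, hx, rfl⟩
        simp only [Submodule.mem_comap, LinearMap.comp_apply, LinearMap.id_apply,
          LieAlgebra.ad_apply, SetLike.mem_coe]
        have hxh : x ∈ S ⊔ Vo := Submodule.mem_sup_right hx
        have h1 : ⁅x, w⁆ ∈ J := hJideal x hxh w hw
        have h2 : ⁅x, ⁅x, w⁆⁆ ∈ J := hJideal x hxh _ h1
        have h3 : ⁅w, sq x⁆ = -⁅sq x, w⁆ := (lie_skew _ _).symm
        rw [h3, hsq_ad x hx w]
        exact Submodule.neg_mem _ h2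
    -- the enlarged ideal J' := J ⊔ span (sq (J ∩ Vo))
    set W' : Submodule K V := Submodule.span K {u : V | ∃ x, x ∈ J ⊓ Vo ∧ u = sq x} with hW'def
    have hW'Ve : W' ≤ Ve := by
      rw [hW'def, Submodule.span_le]
      rintro u ⟨x, hx, rfl⟩
      exact hsq_even x hx.2
    have hW'J : ∀ z : V, ∀ u ∈ W', ⁅z, u⁆ ∈ J := by
      intro z
      suffices hh : W' ≤ J.comap (LieAlgebra.ad K V z) by intro u hu; exact hh hu
      rw [hW'def, Submodule.span_le]
      rintro u ⟨x, hx, rfl⟩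
      simp only [Submodule.mem_comap, LieAlgebra.ad_apply, SetLike.mem_coe]
      have h1 : ⁅z, x⁆ ∈ J := hadJ z x hx.1
      have h2 : ⁅x, z⁆ ∈ J := by
        have : ⁅x, z⁆ = -⁅z, x⁆ := (lie_skew _ _).symm
        rw [this]; exact Submodule.neg_mem _ h1
      have h3 : ⁅x, ⁅x, z⁆⁆ ∈ J := hadJ x _ h2
      have h4 : ⁅z, sq x⁆ = -⁅sq x, z⁆ := (lie_skew _ _).symm
      rw [h4, hsq_ad x hx.2 z]
      exact Submodule.neg_mem _ h3
    set J' : Submodule K V := J ⊔ W' with hJ'def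
    -- odd part of J' is J ⊓ Vo
    have hJ'odd : ∀ x, x ∈ J' → x ∈ Vo → x ∈ J ⊓ Vo := by
      intro x hx hxo
      obtain ⟨j, hj, u, hu, hju⟩ := Submodule.mem_sup.1 hx
      have hjg : j ∈ (J ⊓ S) ⊔ (J ⊓ Vo) := hJgraded ▸ hj
      obtain ⟨j0, hj0, j1, hj1, hj01⟩ := Submodule.mem_sup.1 hjg
      have hxj1 : x - j1 ∈ Ve := by
        have : x - j1 = j0 + u := by
          rw [← hju, ← hj01]; abel
        rw [this]
        exact Submodule.add_mem _ (hSVe hj0.2) (hW'Ve hu)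
      have hxj1' : x - j1 ∈ Vo := Submodule.sub_mem _ hxo hj1.2
      have : x - j1 ∈ Ve ⊓ Vo := ⟨hxj1, hxj1'⟩
      rw [hdisj, Submodule.mem_bot] at this
      have hxeq : x = j1 := by
        have := sub_eq_zero.1 this
        exact this
      rw [hxeq]
      exact hj1
    have hJ'graded : J' = (J' ⊓ Ve) ⊔ (J' ⊓ Vo) := by
      refine le_antisymm ?_ (sup_le inf_le_left inf_le_left)
      have hJle' : J ≤ (J' ⊓ Ve) ⊔ (J' ⊓ Vo) := by
        conv_lhs => rw [hJgraded]
        refine sup_le ?_ ?_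
        · refine le_trans (le_inf ?_ ?_) le_sup_left
          · exact le_trans inf_le_left le_sup_left
          · exact le_trans inf_le_right hSVe
        · refine le_trans (le_inf ?_ inf_le_right) le_sup_right
          exact le_trans inf_le_left le_sup_left
      refine sup_le hJle' ?_
      exact le_trans (le_inf le_sup_right hW'Ve) le_sup_left
    have hJ'ideal : ∀ z : V, ∀ w ∈ J', ⁅z, w⁆ ∈ J' := by
      intro z
      suffices hh : J' ≤ J'.comap (LieAlgebra.ad K V z) by intro w hw; exact hh hw
      refine sup_le ?_ ?_
      · intro w hw
        simp only [Submodule.mem_comap, LieAlgebra.ad_apply]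
        exact Submodule.mem_sup_left (hadJ z w hw)
      · intro u hu
        simp only [Submodule.mem_comap, LieAlgebra.ad_apply]
        exact Submodule.mem_sup_left (hW'J z u hu)
    have hJ'sq : ∀ x ∈ J' ⊓ Vo, sq x ∈ J' := by
      intro x hx
      have hx' : x ∈ J ⊓ Vo := hJ'odd x hx.1 hx.2
      exact Submodule.mem_sup_right (Submodule.subset_span ⟨x, hx', rfl⟩)
    rcases hsimple J' hJ'graded hJ'ideal hJ'sq with hJ' | hJ'
    · left
      have : J ≤ (⊥ : Submodule K V) := le_sup_left.trans (le_of_eq hJ')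
      exact le_bot_iff.1 this
    · right
      refine le_antisymm hJle ?_
      have hVoJ : Vo ≤ J := by
        intro x hx
        have hxJ' : x ∈ J' := by rw [hJ']; exact Submodule.mem_top
        exact (hJ'odd x hxJ' hx).1
      refine sup_le ?_ hVoJ
      rw [hSdef, Submodule.span_le]
      rintro z ⟨x, hx, y, hy, rfl⟩
      exact hadJ x y (hVoJ hy)
end

section
/- Let h = h_even ⊕ h_odd be a Z/2-graded Lie algebra (not superalgebra) over a field of characteristic 2 which has no nonzero proper graded ideals, and suppose i is a nonzero proper (not necessarily graded) ideal of h. Then there exists a linear bijection f : h_even → h_odd such that i = { x + f(x) : x ∈ h_even }, and f satisfies [y, f(x)] = f([y,x]) and [f(y), f(x)] = [y, x] for all x, y ∈ h_even. -/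
/-- Over a field of characteristic 2, let `h = He ⊕ Ho` be a `ℤ/2`-graded Lie algebra
with no nonzero proper graded ideals, and let `i` be a nonzero proper (not
necessarily graded) ideal of `h`.  Then there is a linear bijection
`f : He → Ho` such that `i = { x + f x : x ∈ He }`, and `f` satisfies
`[y, f x] = f [y, x]` and `[f y, f x] = [y, x]` for all `x, y ∈ He`. -/
theorem nongraded_ideal_graph (K : Type*) [Field K] [CharP K 2]
    (H : Type*) [LieRing H] [LieAlgebra K H]
    (He Ho : Submodule K H)
    (hdecomp : He ⊔ Ho = ⊤) (hdisj : He ⊓ Ho = ⊥)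
    (hgr_ee : ∀ x ∈ He, ∀ y ∈ He, ⁅x, y⁆ ∈ He)
    (hgr_eo : ∀ x ∈ He, ∀ y ∈ Ho, ⁅x, y⁆ ∈ Ho)
    (hgr_oo : ∀ x ∈ Ho, ∀ y ∈ Ho, ⁅x, y⁆ ∈ He)
    (hnograded : ∀ J : Submodule K H,
      (J = (J ⊓ He) ⊔ (J ⊓ Ho)) → (∀ z : H, ∀ w ∈ J, ⁅z, w⁆ ∈ J) →
      J = ⊥ ∨ J = ⊤)
    (i : Submodule K H)
    (hideal : ∀ z : H, ∀ w ∈ i, ⁅z, w⁆ ∈ i)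
    (hne_bot : i ≠ ⊥) (hne_top : i ≠ ⊤) :
    ∃ f : H →ₗ[K] H,
      (∀ x ∈ He, f x ∈ Ho) ∧
      (∀ x ∈ He, ∀ y ∈ He, f x = f y → x = y) ∧
      (∀ w ∈ Ho, ∃ x ∈ He, f x = w) ∧
      (∀ z : H, z ∈ i ↔ ∃ x ∈ He, z = x + f x) ∧
      (∀ x ∈ He, ∀ y ∈ He, ⁅y, f x⁆ = f ⁅y, x⁆) ∧
      (∀ x ∈ He, ∀ y ∈ He, ⁅f y, f x⁆ = ⁅y, x⁆) := by
  -- characteristic 2 on H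
  have hchar : ∀ v : H, v + v = 0 := by
    intro v
    have h2 : (2 : K) • v = 0 := by
      rw [show (2 : K) = 0 from CharP.cast_eq_zero K 2, zero_smul]
    calc v + v = (2 : K) • v := (two_smul K v).symm
    _ = 0 := h2
  have hneg : ∀ v : H, -v = v := fun v => by
    rw [neg_eq_iff_add_eq_zero, hchar]
  have hswap : ∀ u v : H, ⁅u, v⁆ = ⁅v, u⁆ := fun u v => by
    rw [← lie_skew, hneg]
  -- projections
  have hc : IsCompl He Ho := ⟨disjoint_iff.mpr hdisj, codisjoint_iff.mpr hdecomp⟩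
  obtain ⟨pe, po, hpem, hpom, hsum, hpee, hpeo, hpoe, hpoo⟩ :
      ∃ pe po : H →ₗ[K] H, (∀ z, pe z ∈ He) ∧ (∀ z, po z ∈ Ho) ∧
        (∀ z, pe z + po z = z) ∧ (∀ x ∈ He, pe x = x) ∧ (∀ y ∈ Ho, pe y = 0) ∧
        (∀ x ∈ He, po x = 0) ∧ (∀ y ∈ Ho, po y = y) := by
    refine ⟨He.subtype ∘ₗ He.projectionOnto Ho hc,
      Ho.subtype ∘ₗ Ho.projectionOnto He hc.symm,
      fun z => (He.projectionOnto Ho hc z).2,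
      fun z => (Ho.projectionOnto He hc.symm z).2,
      fun z => Submodule.projection_add_projection_eq_self hc z,
      fun x hx => congrArg Subtype.val (Submodule.projectionOnto_apply_left hc ⟨x, hx⟩),
      fun y hy => by
        simpa using congrArg Subtype.val
          (Submodule.projectionOnto_apply_of_mem_right hc hy),
      fun x hx => by
        simpa using congrArg Subtype.val
          (Submodule.projectionOnto_apply_of_mem_right hc.symm hx),
      fun y hy => congrArg Subtype.val (Submodule.projectionOnto_apply_left hc.symm ⟨y, hy⟩)⟩
  have hpeab : ∀ a ∈ He, ∀ b ∈ Ho, pe (a + b) = a := fun a ha b hb => by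
    rw [map_add, hpee a ha, hpeo b hb, add_zero]
  have hpoab : ∀ a ∈ He, ∀ b ∈ Ho, po (a + b) = b := fun a ha b hb => by
    rw [map_add, hpoe a ha, hpoo b hb, zero_add]
  -- step 1 : (i ⊓ He) ⊔ (i ⊓ Ho) is a graded ideal contained in i, hence ⊥
  have hbot : i ⊓ He ⊔ i ⊓ Ho = ⊥ := by
    have hgr : i ⊓ He ⊔ i ⊓ Ho = (i ⊓ He ⊔ i ⊓ Ho) ⊓ He ⊔ (i ⊓ He ⊔ i ⊓ Ho) ⊓ Ho := by
      apply le_antisymm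
      · exact sup_le (le_sup_left.trans' (le_inf le_sup_left inf_le_right))
          (le_sup_right.trans' (le_inf le_sup_right inf_le_right))
      · exact sup_le inf_le_left inf_le_left
    have hid : ∀ z : H, ∀ w ∈ i ⊓ He ⊔ i ⊓ Ho, ⁅z, w⁆ ∈ i ⊓ He ⊔ i ⊓ Ho := by
      intro z w hw
      rw [Submodule.mem_sup] at hw
      obtain ⟨a, ha, b, hb, rfl⟩ := hw
      have h1 : ⁅z, a⁆ ∈ i ⊓ He ⊔ i ⊓ Ho := by
        rw [← hsum z, add_lie]
        refine Submodule.add_mem _ (Submodule.mem_sup_left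
            (?_ : _ ∈ i ⊓ He)) (Submodule.mem_sup_right (?_ : _ ∈ i ⊓ Ho))
        · exact ⟨hideal _ _ ha.1, hgr_ee _ (hpem z) _ ha.2⟩
        · refine ⟨hideal _ _ ha.1, ?_⟩
          rw [hswap]
          exact hgr_eo _ ha.2 _ (hpom z)
      have h2 : ⁅z, b⁆ ∈ i ⊓ He ⊔ i ⊓ Ho := by
        rw [← hsum z, add_lie]
        refine Submodule.add_mem _ (Submodule.mem_sup_right
            (?_ : _ ∈ i ⊓ Ho)) (Submodule.mem_sup_left (?_ : _ ∈ i ⊓ He))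
        · exact ⟨hideal _ _ hb.1, hgr_eo _ (hpem z) _ hb.2⟩
        · exact ⟨hideal _ _ hb.1, hgr_oo _ (hpom z) _ hb.2⟩
      rw [lie_add]
      exact Submodule.add_mem _ h1 h2
    rcases hnograded _ hgr hid with h | h
    · exact h
    · exact absurd (top_le_iff.mp (h ▸ sup_le inf_le_left inf_le_left)) hne_top
  have hiHe : ∀ w ∈ i, w ∈ He → w = 0 := by
    intro w hw hw'
    have hmem : w ∈ i ⊓ He := ⟨hw, hw'⟩
    have h : w ∈ i ⊓ He ⊔ i ⊓ Ho := Submodule.mem_sup_left hmem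
    rw [hbot] at h; exact h
  have hiHo : ∀ w ∈ i, w ∈ Ho → w = 0 := by
    intro w hw hw'
    have hmem : w ∈ i ⊓ Ho := ⟨hw, hw'⟩
    have h : w ∈ i ⊓ He ⊔ i ⊓ Ho := Submodule.mem_sup_right hmem
    rw [hbot] at h; exact h
  -- bracket/projection compatibility
  have hpe_lie_e : ∀ t : H, ∀ z ∈ He, ⁅z, pe t⁆ = pe ⁅z, t⁆ := by
    intro t z hz
    conv_rhs => rw [← hsum t, lie_add]
    rw [hpeab _ (hgr_ee _ hz _ (hpem t)) _ (hgr_eo _ hz _ (hpom t))]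
  have hpo_lie_e : ∀ t : H, ∀ z ∈ He, ⁅z, po t⁆ = po ⁅z, t⁆ := by
    intro t z hz
    conv_rhs => rw [← hsum t, lie_add]
    rw [hpoab _ (hgr_ee _ hz _ (hpem t)) _ (hgr_eo _ hz _ (hpom t))]
  have hpe_lie_o : ∀ t : H, ∀ z ∈ Ho, ⁅z, po t⁆ = pe ⁅z, t⁆ := by
    intro t z hz
    conv_rhs => rw [← hsum t, lie_add]
    have h1 : ⁅z, pe t⁆ ∈ Ho := by rw [hswap]; exact hgr_eo _ (hpem t) _ hz
    rw [map_add, hpeo _ h1, hpee _ (hgr_oo _ hz _ (hpom t)), zero_add]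
  have hpo_lie_o : ∀ t : H, ∀ z ∈ Ho, ⁅z, pe t⁆ = po ⁅z, t⁆ := by
    intro t z hz
    conv_rhs => rw [← hsum t, lie_add]
    have h1 : ⁅z, pe t⁆ ∈ Ho := by rw [hswap]; exact hgr_eo _ (hpem t) _ hz
    rw [map_add, hpoo _ h1, hpoe _ (hgr_oo _ hz _ (hpom t)), add_zero]
  -- step 2 : projections of i span everything
  have htop : Submodule.map pe i ⊔ Submodule.map po i = ⊤ := by
    have hgr : Submodule.map pe i ⊔ Submodule.map po i =
        (Submodule.map pe i ⊔ Submodule.map po i) ⊓ He ⊔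
        (Submodule.map pe i ⊔ Submodule.map po i) ⊓ Ho := by
      have hle : Submodule.map pe i ≤ He := by
        rintro _ ⟨w, _, rfl⟩; exact hpem w
      have hlo : Submodule.map po i ≤ Ho := by
        rintro _ ⟨w, _, rfl⟩; exact hpom w
      apply le_antisymm
      · exact sup_le (le_sup_left.trans' (le_inf le_sup_left hle))
          (le_sup_right.trans' (le_inf le_sup_right hlo))
      · exact sup_le inf_le_left inf_le_left
    have hid : ∀ z : H, ∀ w ∈ Submodule.map pe i ⊔ Submodule.map po i,
        ⁅z, w⁆ ∈ Submodule.map pe i ⊔ Submodule.map po i := by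
      intro z w hw
      rw [Submodule.mem_sup] at hw
      obtain ⟨a, ha, b, hb, rfl⟩ := hw
      obtain ⟨u, hu, rfl⟩ := ha
      obtain ⟨v, hv, rfl⟩ := hb
      have h1 : ⁅z, pe u⁆ ∈ Submodule.map pe i ⊔ Submodule.map po i := by
        rw [← hsum z, add_lie]
        refine Submodule.add_mem _ (Submodule.mem_sup_left ?_) (Submodule.mem_sup_right ?_)
        · exact ⟨⁅pe z, u⁆, hideal _ _ hu, (hpe_lie_e u _ (hpem z)).symm⟩
        · exact ⟨⁅po z, u⁆, hideal _ _ hu, (hpo_lie_o u _ (hpom z)).symm⟩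
      have h2 : ⁅z, po v⁆ ∈ Submodule.map pe i ⊔ Submodule.map po i := by
        rw [← hsum z, add_lie]
        refine Submodule.add_mem _ (Submodule.mem_sup_right ?_) (Submodule.mem_sup_left ?_)
        · exact ⟨⁅pe z, v⁆, hideal _ _ hv, (hpo_lie_e v _ (hpem z)).symm⟩
        · exact ⟨⁅po z, v⁆, hideal _ _ hv, (hpe_lie_o v _ (hpom z)).symm⟩
      rw [lie_add]
      exact Submodule.add_mem _ h1 h2
    rcases hnograded _ hgr hid with h | h
    · exfalso
      apply hne_bot
      rw [Submodule.eq_bot_iff] at h ⊢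
      intro w hw
      have h1 : pe w = 0 := h _ (Submodule.mem_sup_left ⟨w, hw, rfl⟩)
      have h2 : po w = 0 := h _ (Submodule.mem_sup_right ⟨w, hw, rfl⟩)
      rw [← hsum w, h1, h2, add_zero]
    · exact h
  -- surjectivity of the projections restricted to i
  have hsurj_e : ∀ x ∈ He, ∃ w ∈ i, pe w = x := by
    intro x hx
    have hx' : x ∈ Submodule.map pe i ⊔ Submodule.map po i := htop ▸ Submodule.mem_top
    rw [Submodule.mem_sup] at hx'
    obtain ⟨a, ⟨u, hu, rfl⟩, b, ⟨v, hv, rfl⟩, hab⟩ := hx'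
    have hbmem : po v ∈ He ⊓ Ho := by
      refine ⟨?_, hpom v⟩
      have hpv : po v = x - pe u := by rw [← hab]; abel
      rw [hpv]; exact Submodule.sub_mem _ hx (hpem u)
    rw [hdisj] at hbmem
    exact ⟨u, hu, by rw [← hab, hbmem, add_zero]⟩
  have hsurj_o : ∀ y ∈ Ho, ∃ w ∈ i, po w = y := by
    intro y hy
    have hy' : y ∈ Submodule.map pe i ⊔ Submodule.map po i := htop ▸ Submodule.mem_top
    rw [Submodule.mem_sup] at hy'
    obtain ⟨a, ⟨u, hu, rfl⟩, b, ⟨v, hv, rfl⟩, hab⟩ := hy'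
    have hamem : pe u ∈ He ⊓ Ho := by
      refine ⟨hpem u, ?_⟩
      have hpu : pe u = y - po v := by rw [← hab]; abel
      rw [hpu]; exact Submodule.sub_mem _ hy (hpom v)
    rw [hdisj] at hamem
    exact ⟨v, hv, by rw [← hab, hamem, zero_add]⟩
  -- injectivity of the projections restricted to i
  have hinj_e : ∀ w ∈ i, ∀ w' ∈ i, pe w = pe w' → w = w' := by
    intro w hw w' hw' hp
    have h1 : w - w' ∈ i := Submodule.sub_mem _ hw hw'
    have h2 : w - w' ∈ Ho := by
      have he : w - w' = po w - po w' := by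
        conv_lhs => rw [← hsum w, ← hsum w', hp]
        abel
      rw [he]; exact Submodule.sub_mem _ (hpom w) (hpom w')
    exact sub_eq_zero.mp (hiHo _ h1 h2)
  have hinj_o : ∀ w ∈ i, ∀ w' ∈ i, po w = po w' → w = w' := by
    intro w hw w' hw' hp
    have h1 : w - w' ∈ i := Submodule.sub_mem _ hw hw'
    have h2 : w - w' ∈ He := by
      have he : w - w' = pe w - pe w' := by
        conv_lhs => rw [← hsum w, ← hsum w', hp]
        abel
      rw [he]; exact Submodule.sub_mem _ (hpem w) (hpem w')
    exact sub_eq_zero.mp (hiHe _ h1 h2)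
  -- construct f
  obtain ⟨f, hf⟩ : ∃ f : H →ₗ[K] H, ∀ w ∈ i, f (pe w) = po w := by
    let φ : i →ₗ[K] He := LinearMap.codRestrict He (pe ∘ₗ i.subtype) fun w => hpem w
    have hφval : ∀ w : i, (φ w : H) = pe w := fun w => rfl
    have hbij : Function.Bijective φ := by
      constructor
      · intro w w' hww
        exact Subtype.ext (hinj_e _ w.2 _ w'.2 (by rw [← hφval, ← hφval, hww]))
      · intro x
        obtain ⟨w, hw, hpw⟩ := hsurj_e x.1 x.2
        exact ⟨⟨w, hw⟩, Subtype.ext (by rw [hφval]; exact hpw)⟩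
    let e := LinearEquiv.ofBijective φ hbij
    refine ⟨(po ∘ₗ i.subtype) ∘ₗ e.symm.toLinearMap ∘ₗ (He.projectionOnto Ho hc), ?_⟩
    intro w hw
    have h1 : He.projectionOnto Ho hc (pe w) = ⟨pe w, hpem w⟩ :=
      Submodule.projectionOnto_apply_left hc ⟨pe w, hpem w⟩
    have h2 : e.symm ⟨pe w, hpem w⟩ = ⟨w, hw⟩ := by
      apply e.injective
      rw [LinearEquiv.apply_symm_apply]
      exact Subtype.ext (hφval ⟨w, hw⟩).symm
    simp only [LinearMap.comp_apply, LinearEquiv.coe_coe, h1, h2, Submodule.coe_subtype]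
  -- basic properties of f
  have hfx : ∀ x ∈ He, ∃ w ∈ i, pe w = x ∧ f x = po w := by
    intro x hx
    obtain ⟨w, hw, hpw⟩ := hsurj_e x hx
    exact ⟨w, hw, hpw, by rw [← hpw, hf w hw]⟩
  have hgraph_mem : ∀ x ∈ He, x + f x ∈ i := by
    intro x hx
    obtain ⟨w, hw, hpw, hfw⟩ := hfx x hx
    rw [hfw, ← hpw, hsum w]
    exact hw
  have hfmem : ∀ x ∈ He, f x ∈ Ho := by
    intro x hx
    obtain ⟨w, _, _, hfw⟩ := hfx x hx
    rw [hfw]; exact hpom w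
  -- the bracket relation [y, f x] = f [y, x]
  have hbr : ∀ x ∈ He, ∀ y ∈ He, ⁅y, f x⁆ = f ⁅y, x⁆ := by
    intro x hx y hy
    obtain ⟨w, hw, hpw, hfw⟩ := hfx x hx
    have hu : ⁅y, w⁆ ∈ i := hideal _ _ hw
    have h1 : pe ⁅y, w⁆ = ⁅y, x⁆ := by rw [← hpe_lie_e w _ hy, hpw]
    have h2 : po ⁅y, w⁆ = ⁅y, f x⁆ := by rw [← hpo_lie_e w _ hy, hfw]
    rw [← h1, hf _ hu, h2]
  refine ⟨f, hfmem, ?_, ?_, ?_, hbr, ?_⟩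
  · -- injectivity
    intro x hx y hy hxy
    obtain ⟨w, hw, hpw, hfw⟩ := hfx x hx
    obtain ⟨w', hw', hpw', hfw'⟩ := hfx y hy
    have : w = w' := hinj_o _ hw _ hw' (by rw [← hfw, ← hfw', hxy])
    rw [← hpw, ← hpw', this]
  · -- surjectivity onto Ho
    intro v hv
    obtain ⟨w, hw, hpw⟩ := hsurj_o v hv
    exact ⟨pe w, hpem w, by rw [hf w hw, hpw]⟩
  · -- graph description
    intro z
    constructor
    · intro hz
      exact ⟨pe z, hpem z, by rw [hf z hz, hsum z]⟩
    · rintro ⟨x, hx, rfl⟩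
      exact hgraph_mem x hx
  · -- [f y, f x] = [y, x]
    intro x hx y hy
    have hu : y + f y ∈ i := hgraph_mem y hy
    have hv : x + f x ∈ i := hgraph_mem x hx
    have hc1 : ⁅y + f y, x + f x⁆ ∈ i := hideal _ _ hv
    have hodd : ⁅y, f x⁆ + ⁅f y, x⁆ = 0 := by
      have e1 : ⁅f y, x⁆ = f ⁅y, x⁆ := by
        rw [hswap, hbr y hy x hx, hswap x y]
      rw [hbr x hx y hy, e1, hchar]
    have hexp : ⁅y + f y, x + f x⁆ = ⁅y, x⁆ + ⁅f y, f x⁆ := by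
      rw [add_lie, lie_add, lie_add]
      have : ⁅y, x⁆ + ⁅y, f x⁆ + (⁅f y, x⁆ + ⁅f y, f x⁆) =
          ⁅y, x⁆ + ⁅f y, f x⁆ + (⁅y, f x⁆ + ⁅f y, x⁆) := by abel
      rw [this, hodd, add_zero]
    have hHe : ⁅y + f y, x + f x⁆ ∈ He := by
      rw [hexp]
      exact Submodule.add_mem _ (hgr_ee _ hy _ hx)
        (hgr_oo _ (hfmem y hy) _ (hfmem x hx))
    have h0 : ⁅y, x⁆ + ⁅f y, f x⁆ = 0 := by
      rw [← hexp]; exact hiHe _ hc1 hHe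
    have := eq_neg_of_add_eq_zero_right h0
    rw [this, hneg]
end

section
/- Over a field of characteristic 2, the even-trace etr(A,B) := tr(A) on q(n) does not vanish on the derived superalgebra q(n)^{(1)} (for n ≥ 1), since the square of the odd element (0,B) equals (B²,0) and tr(B²) can be nonzero; but etr does vanish on the derived superalgebra sq(n)^{(1)} of the queertraceless subalgebra sq(n) = { (A,B) : tr(B) = 0 }. -/
/-- The bracket of the queerification `q(n)` (characteristic 2): elements are pairs
`(A,B)` of `n × n` matrices, with
`[(A,B),(A',B')] = (⁅A,A'⁆ + B*B' + B'*B, ⁅A,B'⁆ + ⁅A',B⁆)` and squaring of the odd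
element `(0,B)` equal to `(B*B, 0)`. -/
def qBracket {K : Type*} [Field K] {n : ℕ}
    (p q : Matrix (Fin n) (Fin n) K × Matrix (Fin n) (Fin n) K) :
    Matrix (Fin n) (Fin n) K × Matrix (Fin n) (Fin n) K :=
  (⁅p.1, q.1⁆ + (p.2 * q.2 + q.2 * p.2), ⁅p.1, q.2⁆ + ⁅q.1, p.2⁆)

private lemma offDiag_sum_zero {K : Type*} [Field K] [CharP K 2] {ι : Type*} [Fintype ι]
    [DecidableEq ι] (f : ι → ι → K) (hf : ∀ i j, f i j = f j i) :
    ∑ p ∈ Finset.univ.offDiag, f p.1 p.2 = 0 := by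
  have h2 : (2 : K) = 0 := by simpa using CharP.cast_eq_zero K 2
  refine Finset.sum_involution (fun a _ => Prod.swap a) (fun a _ => ?_) (fun a ha _ => ?_)
    (fun a ha => ?_) (fun a _ => ?_)
  · simp only [Prod.fst_swap, Prod.snd_swap]
    rw [hf a.2 a.1, ← two_mul, h2, zero_mul]
  · rw [Finset.mem_offDiag] at ha
    exact fun h => ha.2.2 ((Prod.ext_iff.mp h).1).symm
  · rw [Finset.mem_offDiag] at ha ⊢
    exact ⟨Finset.mem_univ _, Finset.mem_univ _, fun h => ha.2.2 h.symm⟩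
  · simp

private lemma trace_sq {K : Type*} [Field K] [CharP K 2] {n : ℕ}
    (B : Matrix (Fin n) (Fin n) K) :
    Matrix.trace (B * B) = (Matrix.trace B) ^ 2 := by
  have h1 : Matrix.trace (B * B) = ∑ p ∈ Finset.univ ×ˢ Finset.univ, B p.1 p.2 * B p.2 p.1 := by
    rw [Finset.sum_product]
    simp [Matrix.trace, Matrix.mul_apply, Matrix.diag]
  have h2 : (Matrix.trace B) ^ 2 = ∑ p ∈ Finset.univ ×ˢ Finset.univ, B p.1 p.1 * B p.2 p.2 := by
    simp only [sq, Matrix.trace, Matrix.diag, Finset.sum_mul_sum, Finset.sum_product]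
  rw [h1, h2, ← Finset.diag_union_offDiag (Finset.univ : Finset (Fin n)),
    Finset.sum_union (Finset.disjoint_diag_offDiag _),
    Finset.sum_union (Finset.disjoint_diag_offDiag _),
    offDiag_sum_zero (fun i j => B i j * B j i) (fun i j => by ring),
    offDiag_sum_zero (fun i j => B i i * B j j) (fun i j => by ring),
    add_zero, add_zero]
  refine Finset.sum_congr rfl fun x hx => ?_
  rw [Finset.mem_diag] at hx
  rw [hx.2]

/-- Over a field of characteristic 2 and for `n ≥ 1`, the even-trace
`etr (A,B) = tr A` does not vanish on the derived superalgebra `q(n)^{(1)}`: there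
is an odd element `(0,B)` whose square `(B*B, 0)` has `tr (B*B) ≠ 0`.  However,
`etr` does vanish on the derived superalgebra `sq(n)^{(1)}` of the queertraceless
subalgebra `sq(n) = {(A,B) : tr B = 0}`. -/
theorem etr_on_derived (K : Type*) [Field K] [CharP K 2] (n : ℕ) (hn : 1 ≤ n) :
    (∃ B : Matrix (Fin n) (Fin n) K, Matrix.trace (B * B) ≠ 0) ∧
    (∀ z ∈ Submodule.span K
      ({w : Matrix (Fin n) (Fin n) K × Matrix (Fin n) (Fin n) K |
          ∃ p q, Matrix.trace p.2 = 0 ∧ Matrix.trace q.2 = 0 ∧ w = qBracket p q} ∪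
        {w | ∃ B : Matrix (Fin n) (Fin n) K, Matrix.trace B = 0 ∧ w = (B * B, 0)}),
      Matrix.trace (Prod.fst z) = 0) := by
  constructor
  · obtain ⟨i⟩ : Nonempty (Fin n) := ⟨⟨0, hn⟩⟩
    refine ⟨Matrix.single i i 1, ?_⟩
    rw [trace_sq]
    simp
  · intro z hz
    have : z ∈ Submodule.span K _ := hz
    -- use the linear map z ↦ trace z.1
    let f : (Matrix (Fin n) (Fin n) K × Matrix (Fin n) (Fin n) K) →ₗ[K] K :=
      Matrix.traceLinearMap (Fin n) K K ∘ₗ LinearMap.fst K _ _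
    have hker : ∀ w ∈ ({w : Matrix (Fin n) (Fin n) K × Matrix (Fin n) (Fin n) K |
          ∃ p q, Matrix.trace p.2 = 0 ∧ Matrix.trace q.2 = 0 ∧ w = qBracket p q} ∪
        {w | ∃ B : Matrix (Fin n) (Fin n) K, Matrix.trace B = 0 ∧ w = (B * B, 0)}), f w = 0 := by
      rintro w (⟨p, q, hp, hq, rfl⟩ | ⟨B, hB, rfl⟩)
      · show Matrix.trace (qBracket p q).1 = 0
        have h2 : (2 : K) = 0 := by simpa using CharP.cast_eq_zero K 2
        have hlie : Matrix.trace ⁅p.1, q.1⁆ = 0 := by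
          rw [Ring.lie_def, Matrix.trace_sub, Matrix.trace_mul_comm, sub_self]
        have hanti : Matrix.trace (p.2 * q.2 + q.2 * p.2) = 0 := by
          rw [Matrix.trace_add, Matrix.trace_mul_comm q.2 p.2, ← two_mul, h2, zero_mul]
        simp [qBracket, Matrix.trace_add, hlie, hanti]
      · show Matrix.trace (B * B) = 0
        rw [trace_sq, hB]
        ring
    have hsub : Submodule.span K _ ≤ LinearMap.ker f := Submodule.span_le.mpr hker
    exact hsub hz
end

section
/- Let g be a restricted Lie superalgebra over a field of characteristic 2 with 2|4-structure ([2] on g_even, squaring on g_odd). Define a map [2] on all of g by (x+y)^{[2]} := x^{[2]} + y² + [x,y] for x ∈ g_even, y ∈ g_odd (where y² is the squaring). Then this map satisfies [z^{[2]}, w] = [z,[z,w]] for every z ∈ g and w ∈ g, i.e., the desuperization F(g) is a restricted Lie algebra (2|2-structure). -/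
/-- Over a field of characteristic 2, let `g = Ve ⊕ Vo` be a Lie superalgebra
(modelled on its desuperization `F(g)`) with a `2|4`-structure: a 2-operation
`sqE` on the even part and the intrinsic squaring `sqO` on the odd part, both with
`ad (square) = (ad)²` on the whole of `g`.  Then the map
`(x + y)^{[2]} := sqE x + sqO y + ⁅x, y⁆` (for `x` even, `y` odd) satisfies
`[z^{[2]}, w] = [z, [z, w]]` for all `z, w`; i.e. `F(g)` is a restricted Lie
algebra (`2|2`-structure). -/
theorem two_two_structure (K : Type*) [Field K] [CharP K 2]
    (V : Type*) [LieRing V] [LieAlgebra K V]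
    (Ve Vo : Submodule K V)
    (hdecomp : Ve ⊔ Vo = ⊤) (hdisj : Ve ⊓ Vo = ⊥)
    (hgr_ee : ∀ x ∈ Ve, ∀ y ∈ Ve, ⁅x, y⁆ ∈ Ve)
    (hgr_eo : ∀ x ∈ Ve, ∀ y ∈ Vo, ⁅x, y⁆ ∈ Vo)
    (hgr_oo : ∀ x ∈ Vo, ∀ y ∈ Vo, ⁅x, y⁆ ∈ Ve)
    (sqE sqO : V → V)
    (hE : ∀ x ∈ Ve, ∀ w : V, ⁅sqE x, w⁆ = ⁅x, ⁅x, w⁆⁆)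
    (hO : ∀ y ∈ Vo, ∀ w : V, ⁅sqO y, w⁆ = ⁅y, ⁅y, w⁆⁆) :
    ∀ x ∈ Ve, ∀ y ∈ Vo, ∀ w : V,
      ⁅sqE x + sqO y + ⁅x, y⁆, w⁆ = ⁅x + y, ⁅x + y, w⁆⁆ := by
  intro x hx y hy w
  have h2 : ∀ v : V, v + v = 0 := by
    intro v
    have h : ((2 : K)) = 0 := by exact_mod_cast CharP.cast_eq_zero K 2
    have := congrArg (· • v) h
    simpa [two_smul] using this
  have hneg : ∀ v : V, -v = v := by
    intro v; rw [neg_eq_iff_add_eq_zero, h2]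
  simp only [add_lie, lie_add, hE x hx, hO y hy, lie_lie, sub_eq_add_neg, hneg]
  abel
end
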